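/- Let ν, κ ∈ ℝ with ν² = κ² ≠ 0. Define Ψ_M(r) := (−ν, κ) (constant) and Ψ_U(r) := (ln r)·(−ν, κ) − (1/(2κ))·(ν, κ) for r > 0. Then Ψ_M and Ψ_U both satisfy d^{ν,κ}Ψ = 0 on (0,∞), and every differentiable function f : (0,∞) → ℂ² with d^{ν,κ}f = 0 on (0,∞) is of the form f = a·Ψ_M + b·Ψ_U for some constants a, b ∈ ℂ. -/

import Mathlib

open Complex

/-- `IsDiracSol ν κ lam f₁ f₂` says that `f = (f₁, f₂) : (0,∞) → ℂ²` is differentiable on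
`(0,∞)` and satisfies the Coulomb–Dirac equation `d^{ν,κ} f = lam • f` there. -/
def IsDiracSol (ν κ : ℝ) (lam : ℂ) (f₁ f₂ : ℝ → ℂ) : Prop :=
  ∀ r : ℝ, 0 < r →
    DifferentiableAt ℝ f₁ r ∧ DifferentiableAt ℝ f₂ r ∧
    -((ν : ℂ) / (r : ℂ)) * f₁ r - deriv f₂ r - ((κ : ℂ) / (r : ℂ)) * f₂ r = lam * f₁ r ∧
    deriv f₁ r - ((κ : ℂ) / (r : ℂ)) * f₁ r - ((ν : ℂ) / (r : ℂ)) * f₂ r = lam * f₂ r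

/-- A function with vanishing derivative on `(0,∞)` is constant there. -/
lemma const_on_Ioi_aux {g : ℝ → ℂ} (hg : ∀ r : ℝ, 0 < r → HasDerivAt g 0 r)
    {r : ℝ} (hr : 0 < r) : g r = g 1 := by
  apply (convex_Ioi (0:ℝ)).is_const_of_fderivWithin_eq_zero (𝕜 := ℝ)
    (fun x hx => ((hg x hx).differentiableAt.differentiableWithinAt))
    (fun x hx => ?_) hr (by norm_num)
  rw [fderivWithin_of_isOpen isOpen_Ioi hx, (hg x hx).hasFDerivAt.fderiv]
  ext
  simp

/-- Complexified logarithm derivative. -/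
lemma hasDerivAt_clog {r : ℝ} (hr : 0 < r) :
    HasDerivAt (fun x : ℝ => (Real.log x : ℂ)) ((r : ℂ)⁻¹) r := by
  have := (Real.hasDerivAt_log (ne_of_gt hr)).ofReal_comp
  simpa using this

/-- For `ν² = κ² ≠ 0`, the functions `Ψ_M(r) = (−ν, κ)` and
`Ψ_U(r) = (ln r)·(−ν, κ) − (1/(2κ))·(ν, κ)` solve `d^{ν,κ}Ψ = 0` on `(0,∞)`, and every
differentiable solution of `d^{ν,κ}f = 0` on `(0,∞)` is a linear combination of them. -/
theorem fundamental_solutions_degenerate (ν κ : ℝ) (heq : ν ^ 2 = κ ^ 2) (hκ : κ ≠ 0) :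
    IsDiracSol ν κ 0 (fun _ => -(ν : ℂ)) (fun _ => (κ : ℂ)) ∧
    IsDiracSol ν κ 0 (fun r => (Real.log r : ℂ) * (-(ν : ℂ)) - (1 / (2 * (κ : ℂ))) * (ν : ℂ))
      (fun r => (Real.log r : ℂ) * (κ : ℂ) - (1 / (2 * (κ : ℂ))) * (κ : ℂ)) ∧
    ∀ f₁ f₂ : ℝ → ℂ, IsDiracSol ν κ 0 f₁ f₂ →
      ∃ a b : ℂ, ∀ r : ℝ, 0 < r →
        f₁ r = a * (-(ν : ℂ)) +
            b * ((Real.log r : ℂ) * (-(ν : ℂ)) - (1 / (2 * (κ : ℂ))) * (ν : ℂ)) ∧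
        f₂ r = a * (κ : ℂ) +
            b * ((Real.log r : ℂ) * (κ : ℂ) - (1 / (2 * (κ : ℂ))) * (κ : ℂ)) := by
  have hkC : (κ : ℂ) ≠ 0 := by exact_mod_cast hκ
  have hν : ν ≠ 0 := by
    intro h
    rw [h] at heq
    apply hκ
    nlinarith [sq_nonneg κ]
  have hnC : (ν : ℂ) ≠ 0 := by exact_mod_cast hν
  have heqC : (ν : ℂ) ^ 2 = (κ : ℂ) ^ 2 := by exact_mod_cast heq
  refine ⟨?_, ?_, ?_⟩
  · -- Ψ_M is a solution
    intro r hr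
    have hrC : (r : ℂ) ≠ 0 := by exact_mod_cast ne_of_gt hr
    refine ⟨differentiableAt_const _, differentiableAt_const _, ?_, ?_⟩
    · rw [deriv_const]
      field_simp
      linear_combination heqC
    · rw [deriv_const]
      field_simp
      ring
  · -- Ψ_U is a solution
    intro r hr
    have hrC : (r : ℂ) ≠ 0 := by exact_mod_cast ne_of_gt hr
    have hd1 : HasDerivAt (fun r : ℝ =>
        (Real.log r : ℂ) * (-(ν : ℂ)) - (1 / (2 * (κ : ℂ))) * (ν : ℂ))
        ((r : ℂ)⁻¹ * (-(ν : ℂ))) r :=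
      ((hasDerivAt_clog hr).mul_const _).sub_const _
    have hd2 : HasDerivAt (fun r : ℝ =>
        (Real.log r : ℂ) * (κ : ℂ) - (1 / (2 * (κ : ℂ))) * (κ : ℂ))
        ((r : ℂ)⁻¹ * (κ : ℂ)) r :=
      ((hasDerivAt_clog hr).mul_const _).sub_const _
    refine ⟨hd1.differentiableAt, hd2.differentiableAt, ?_, ?_⟩
    · rw [hd2.deriv]
      field_simp
      linear_combination (1 + 2 * (Real.log r : ℂ) * (κ:ℂ)) * heqC
    · rw [hd1.deriv]
      field_simp
      ring
  · -- uniqueness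
    intro f₁ f₂ hf
    -- derivative formulas
    have hd1 : ∀ r : ℝ, 0 < r →
        HasDerivAt f₁ (((κ : ℂ) / r) * f₁ r + ((ν : ℂ) / r) * f₂ r) r := by
      intro r hr
      obtain ⟨h1, h2, e1, e2⟩ := hf r hr
      have : deriv f₁ r = ((κ : ℂ) / r) * f₁ r + ((ν : ℂ) / r) * f₂ r := by
        linear_combination e2
      exact this ▸ h1.hasDerivAt
    have hd2 : ∀ r : ℝ, 0 < r →
        HasDerivAt f₂ (-(((ν : ℂ) / r) * f₁ r) - ((κ : ℂ) / r) * f₂ r) r := by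
      intro r hr
      obtain ⟨h1, h2, e1, e2⟩ := hf r hr
      have : deriv f₂ r = -(((ν : ℂ) / r) * f₁ r) - ((κ : ℂ) / r) * f₂ r := by
        linear_combination -e1
      exact this ▸ h2.hasDerivAt
    -- u = ν f₁ + κ f₂ is constant
    obtain ⟨c, hu⟩ : ∃ c : ℂ, ∀ r : ℝ, 0 < r → (ν : ℂ) * f₁ r + (κ : ℂ) * f₂ r = c := by
      refine ⟨(ν : ℂ) * f₁ 1 + (κ : ℂ) * f₂ 1, fun r hr =>
        const_on_Ioi_aux (g := fun y : ℝ => (ν : ℂ) * f₁ y + (κ : ℂ) * f₂ y)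
          (fun x hx => ?_) hr⟩
      have hxC : (x : ℂ) ≠ 0 := by exact_mod_cast ne_of_gt hx
      have := ((hd1 x hx).const_mul ((ν : ℂ))).add ((hd2 x hx).const_mul ((κ : ℂ)))
      refine this.congr_deriv ?_
      linear_combination (f₂ x / (x:ℂ)) * heqC
    -- f₁ - (νc/κ) log is constant
    obtain ⟨A, hf1⟩ : ∃ A : ℂ, ∀ r : ℝ, 0 < r →
        f₁ r = ((ν : ℂ) * c / κ) * (Real.log r : ℂ) + A := by
      refine ⟨f₁ 1, fun r hr => ?_⟩
      have hg : ∀ x : ℝ, 0 < x →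
          HasDerivAt (fun y : ℝ => f₁ y - ((ν : ℂ) * c / κ) * (Real.log y : ℂ)) 0 x := by
        intro x hx
        have hxC : (x : ℂ) ≠ 0 := by exact_mod_cast ne_of_gt hx
        have := (hd1 x hx).sub ((hasDerivAt_clog hx).const_mul ((ν : ℂ) * c / κ))
        refine this.congr_deriv ?_
        have hux := hu x hx
        linear_combination ((ν:ℂ) / ((κ:ℂ) * (x:ℂ))) * hux + (-(f₁ x) / ((κ:ℂ) * (x:ℂ))) * heqC +
          (-(f₁ x) * (κ:ℂ) / (x:ℂ) - (ν:ℂ) * f₂ x / (x:ℂ)) * mul_inv_cancel₀ hkC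
      have := const_on_Ioi_aux hg hr
      simp only [Real.log_one, ofReal_zero, mul_zero, sub_zero] at this
      linear_combination this
    -- f₂ determined
    have hf2 : ∀ r : ℝ, 0 < r →
        f₂ r = (c - (ν : ℂ) * f₁ r) / κ := by
      intro r hr
      have := hu r hr
      field_simp
      linear_combination this
    refine ⟨-A / ν + c / (2 * κ ^ 2), -c / κ, ?_⟩
    intro r hr
    have hiv : (ν : ℂ)⁻¹ * (ν : ℂ) = 1 := inv_mul_cancel₀ hnC
    have hik : (κ : ℂ)⁻¹ * (κ : ℂ) = 1 := inv_mul_cancel₀ hkC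
    constructor
    · rw [hf1 r hr]
      linear_combination (-A) * hiv
    · rw [hf2 r hr, hf1 r hr]
      linear_combination
        (-c * ((κ:ℂ)⁻¹)^2 * (Real.log r : ℂ) - A * (ν:ℂ)⁻¹ * (κ:ℂ)⁻¹) * heqC +
        (A * (ν:ℂ) * (κ:ℂ)⁻¹) * hiv +
        (-c * (κ:ℂ) * (κ:ℂ)⁻¹ * (Real.log r : ℂ) - c * (κ:ℂ)⁻¹ - A * (κ:ℂ) * (ν:ℂ)⁻¹) * hik
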